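/- Let F ⊆ ℤ² ∖ {(0,0)} be a finite set such that F = −F, there exist k, j ∈ F with |k| ≠ |j| (Euclidean norms), and the subgroup of ℤ² generated by F equals ℤ². Define A₀ := F and, inductively, A_{n+1} := A_n ∪ { k + j : k ∈ A_n, j ∈ F, |k| ≠ |j|, k·j^⊥ ≠ 0 }, where for j = (j₁,j₂) we set j^⊥ := (−j₂, j₁). Then ⋃_{n ∈ ℕ} A_n = ℤ² ∖ {(0,0)}. -/

import Mathlib

namespace ForcedModes

def Nr (p : ℤ × ℤ) : ℤ := p.1^2 + p.2^2
def dt (p q : ℤ × ℤ) : ℤ := p.1*q.1 + p.2*q.2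
def crs (p q : ℤ × ℤ) : ℤ := p.1*q.2 - p.2*q.1

lemma Nr_nonneg (p : ℤ × ℤ) : 0 ≤ Nr p := by unfold Nr; positivity

lemma Nr_pos {p : ℤ × ℤ} (h : p ≠ 0) : 0 < Nr p := by
  rcases p with ⟨u, v⟩
  have : u ≠ 0 ∨ v ≠ 0 := by
    by_contra hc
    push_neg at hc
    exact h (by simp [hc.1, hc.2, Prod.ext_iff])
  unfold Nr
  simp only
  rcases this with h1 | h1
  · have h3 : 1 ≤ |u| := Int.one_le_abs h1
    have h2 : 1 ≤ u^2 := by nlinarith [sq_abs u, abs_nonneg u]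
    nlinarith [sq_nonneg v]
  · have h3 : 1 ≤ |v| := Int.one_le_abs h1
    have h2 : 1 ≤ v^2 := by nlinarith [sq_abs v, abs_nonneg v]
    nlinarith [sq_nonneg u]

lemma ne_zero_of_Nr_pos {p : ℤ × ℤ} (h : 0 < Nr p) : p ≠ 0 := by
  intro h0
  rw [h0] at h
  norm_num [Nr] at h

lemma Nr_neg (p : ℤ × ℤ) : Nr (-p) = Nr p := by
  unfold Nr
  rw [Prod.fst_neg, Prod.snd_neg]
  ring

lemma Nr_add (p q : ℤ × ℤ) : Nr (p + q) = Nr p + 2 * dt p q + Nr q := by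
  unfold Nr dt; simp [Prod.fst_add, Prod.snd_add]; ring

lemma dt_neg (p q : ℤ × ℤ) : dt p (-q) = -dt p q := by unfold dt; simp; ring

lemma lagrange (p q : ℤ × ℤ) : dt p q^2 + crs p q^2 = Nr p * Nr q := by
  unfold Nr dt crs; ring

lemma crs_sq_le (p q : ℤ × ℤ) : crs p q^2 ≤ Nr p * Nr q := by
  have := lagrange p q
  nlinarith [sq_nonneg (dt p q)]

lemma crs_swap (p q : ℤ × ℤ) : crs q p = -crs p q := by unfold crs; ring

lemma crs_neg_right (p q : ℤ × ℤ) : crs p (-q) = -crs p q := by unfold crs; simp; ring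

lemma partrans {j k m : ℤ × ℤ} (hj : j ≠ 0) (h1 : crs j k = 0) (h2 : crs j m = 0) :
    crs k m = 0 := by
  have hj1 : j.1 ≠ 0 ∨ j.2 ≠ 0 := by
    by_contra hc; push_neg at hc
    exact hj (by rcases j with ⟨u,v⟩; simp at hc ⊢; exact ⟨hc.1, hc.2⟩)
  unfold crs at *
  rcases hj1 with h | h
  · have : j.1 * (k.1 * m.2 - k.2 * m.1) = 0 := by linear_combination k.1 * h2 - m.1 * h1
    rcases mul_eq_zero.mp this with h' | h'
    · exact absurd h' h
    · exact h'
  · have : j.2 * (k.1 * m.2 - k.2 * m.1) = 0 := by linear_combination k.2 * h2 - m.2 * h1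
    rcases mul_eq_zero.mp this with h' | h'
    · exact absurd h' h
    · exact h'

lemma not_par_both {z a b : ℤ × ℤ} (hz : z ≠ 0) (hab : crs a b ≠ 0)
    (h1 : crs z a = 0) (h2 : crs z b = 0) : False :=
  hab (partrans hz h1 h2)

lemma natAbs_sq' (a : ℤ) : ((a.natAbs : ℤ))^2 = a^2 := by
  rw [sq, sq]
  exact_mod_cast Int.natAbs_mul_self (a := a)
structure Ctx where
  S : Set (ℤ × ℤ)
  F : Set (ℤ × ℤ)
  a : ℤ × ℤ
  b : ℤ × ℤ
  hFS : F ⊆ S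
  hstep : ∀ k ∈ S, ∀ j ∈ F, Nr k ≠ Nr j → crs k j ≠ 0 → k + j ∈ S
  haF : a ∈ F
  hbF : b ∈ F
  hsym : ∀ f ∈ F, -f ∈ F
  hab : crs a b ≠ 0
  hN : Nr a ≠ Nr b
  h0F : (0 : ℤ × ℤ) ∉ F

namespace Ctx

variable (C : Ctx)

lemma ha0 : C.a ≠ 0 := by
  intro h
  apply C.hab
  rw [h]
  unfold crs
  norm_num

lemma hb0 : C.b ≠ 0 := by
  intro h
  apply C.hab
  rw [h]
  unfold crs
  norm_num

def Q : ℤ := max (Nr C.a) (Nr C.b)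

def swap : Ctx :=
  ⟨C.S, C.F, C.b, C.a, C.hFS, C.hstep, C.hbF, C.haF, C.hsym,
   by rw [crs_swap]; exact neg_ne_zero.mpr C.hab, C.hN.symm, C.h0F⟩

lemma swap_Q : C.swap.Q = C.Q := max_comm _ _

def pt (x : ℤ × ℤ) (σ τ : ℤ) : ℤ × ℤ :=
  (x.1 + σ * C.a.1 + τ * C.b.1, x.2 + σ * C.a.2 + τ * C.b.2)

lemma swap_pt (x : ℤ × ℤ) (σ τ : ℤ) : C.swap.pt x σ τ = C.pt x τ σ := by
  unfold pt swap
  simp only [Prod.mk.injEq]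
  constructor <;> ring

lemma pt_zero (x : ℤ × ℤ) : C.pt x 0 0 = x := by
  unfold pt
  ext <;> simp

lemma pt_pt (x : ℤ × ℤ) (σ τ σ' τ' : ℤ) :
    C.pt (C.pt x σ τ) σ' τ' = C.pt x (σ + σ') (τ + τ') := by
  unfold pt
  simp only [Prod.mk.injEq]
  constructor <;> ring

lemma pt_add_a (x : ℤ × ℤ) (σ τ : ℤ) : C.pt x σ τ + C.a = C.pt x (σ + 1) τ := by
  unfold pt
  simp only [Prod.ext_iff, Prod.fst_add, Prod.snd_add, Prod.fst_neg, Prod.snd_neg]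
  constructor <;> ring

lemma pt_sub_a (x : ℤ × ℤ) (σ τ : ℤ) : C.pt x σ τ + -C.a = C.pt x (σ - 1) τ := by
  unfold pt
  simp only [Prod.ext_iff, Prod.fst_add, Prod.snd_add, Prod.fst_neg, Prod.snd_neg]
  constructor <;> ring

lemma pt_add_b (x : ℤ × ℤ) (σ τ : ℤ) : C.pt x σ τ + C.b = C.pt x σ (τ + 1) := by
  unfold pt
  simp only [Prod.ext_iff, Prod.fst_add, Prod.snd_add, Prod.fst_neg, Prod.snd_neg]
  constructor <;> ring

lemma pt_sub_b (x : ℤ × ℤ) (σ τ : ℤ) : C.pt x σ τ + -C.b = C.pt x σ (τ - 1) := by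
  unfold pt
  simp only [Prod.ext_iff, Prod.fst_add, Prod.snd_add, Prod.fst_neg, Prod.snd_neg]
  constructor <;> ring

lemma crs_pt_a (x : ℤ × ℤ) (σ τ : ℤ) :
    crs (C.pt x σ τ) C.a = crs x C.a + τ * crs C.b C.a := by
  unfold pt crs
  simp only
  ring

lemma crs_pt_b (x : ℤ × ℤ) (σ τ : ℤ) :
    crs (C.pt x σ τ) C.b = crs x C.b + σ * crs C.a C.b := by
  unfold pt crs
  simp only
  ring

lemma crs_pt_f (x : ℤ × ℤ) (f : ℤ × ℤ) (σ τ : ℤ) :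
    crs (C.pt x σ τ) f = crs x f + σ * crs C.a f + τ * crs C.b f := by
  unfold pt crs
  simp only
  ring

def coset (x y : ℤ × ℤ) : Prop := ∃ σ τ : ℤ, y = C.pt x σ τ

lemma coset_refl (x : ℤ × ℤ) : C.coset x x := ⟨0, 0, (C.pt_zero x).symm⟩

lemma coset_trans {x y z : ℤ × ℤ} (h1 : C.coset x y) (h2 : C.coset y z) : C.coset x z := by
  obtain ⟨σ, τ, rfl⟩ := h1
  obtain ⟨σ', τ', rfl⟩ := h2
  exact ⟨σ + σ', τ + τ', C.pt_pt x σ τ σ' τ'⟩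

lemma coset_symm {x y : ℤ × ℤ} (h : C.coset x y) : C.coset y x := by
  obtain ⟨σ, τ, rfl⟩ := h
  refine ⟨-σ, -τ, ?_⟩
  rw [C.pt_pt]
  simp [C.pt_zero]

lemma swap_coset (x y : ℤ × ℤ) : C.swap.coset x y ↔ C.coset x y := by
  constructor
  · rintro ⟨σ, τ, rfl⟩
    exact ⟨τ, σ, (C.swap_pt x σ τ).symm ▸ rfl⟩
  · rintro ⟨σ, τ, rfl⟩
    exact ⟨τ, σ, by rw [C.swap_pt]⟩

variable (C : Ctx)

lemma hNa : 0 < Nr C.a := Nr_pos C.ha0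
lemma hNb : 0 < Nr C.b := Nr_pos C.hb0
lemma hQa : Nr C.a ≤ C.Q := le_max_left _ _
lemma hQb : Nr C.b ≤ C.Q := le_max_right _ _
lemma hQpos : 0 < C.Q := lt_of_lt_of_le C.hNa C.hQa

/-- The pump: from `a`, points `ℓ•a + m•b` with `ℓ ≥ 1` reach every row `m ≥ 0`. -/
lemma pumpNat : ∀ m : ℕ, ∃ ℓ : ℤ, 1 ≤ ℓ ∧ C.pt 0 ℓ (m : ℤ) ∈ C.S ∧ Nr (C.pt 0 ℓ (m : ℤ)) ≠ Nr C.b := by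
  intro m
  induction m with
  | zero =>
    push_cast
    refine ⟨1, le_refl _, ?_, ?_⟩
    · have : C.pt 0 1 0 = C.a := by
        unfold pt
        simp
      rw [this]
      exact C.hFS C.haF
    · have : C.pt 0 1 0 = C.a := by unfold pt; simp
      rw [this]
      exact C.hN
  | succ m ih =>
    obtain ⟨ℓ, hℓ, hS, hNe⟩ := ih
    push_cast
    -- step by b
    have hcrs_b : crs (C.pt 0 ℓ m) C.b ≠ 0 := by
      rw [C.crs_pt_b]
      have : crs (0 : ℤ × ℤ) C.b = 0 := by unfold crs; simp
      rw [this, zero_add]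
      exact mul_ne_zero (by omega) C.hab
    have h1 : C.pt 0 ℓ ((m:ℤ) + 1) ∈ C.S := by
      have := C.hstep _ hS _ C.hbF hNe hcrs_b
      rwa [C.pt_add_b] at this
    by_cases hn1 : Nr (C.pt 0 ℓ ((m:ℤ) + 1)) ≠ Nr C.b
    · exact ⟨ℓ, hℓ, h1, hn1⟩
    push_neg at hn1
    -- step by a
    have hcrs_a : ∀ ℓ' : ℤ, crs (C.pt 0 ℓ' ((m:ℤ) + 1)) C.a ≠ 0 := by
      intro ℓ'
      rw [C.crs_pt_a]
      have : crs (0 : ℤ × ℤ) C.a = 0 := by unfold crs; simp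
      rw [this, zero_add]
      refine mul_ne_zero (by positivity) ?_
      rw [crs_swap]
      exact neg_ne_zero.mpr C.hab
    have h2 : C.pt 0 (ℓ + 1) ((m:ℤ) + 1) ∈ C.S := by
      have := C.hstep _ h1 _ C.haF (by rw [hn1]; exact fun h => C.hN h.symm) (hcrs_a ℓ)
      rwa [C.pt_add_a] at this
    by_cases hn2 : Nr (C.pt 0 (ℓ + 1) ((m:ℤ) + 1)) ≠ Nr C.b
    · exact ⟨ℓ + 1, by omega, h2, hn2⟩
    push_neg at hn2
    have h3 : C.pt 0 (ℓ + 2) ((m:ℤ) + 1) ∈ C.S := by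
      have := C.hstep _ h2 _ C.haF (by rw [hn2]; exact fun h => C.hN h.symm) (hcrs_a (ℓ + 1))
      have e : C.pt 0 (ℓ + 1) ((m:ℤ) + 1) + C.a = C.pt 0 (ℓ + 2) ((m:ℤ) + 1) := by
        rw [C.pt_add_a]
        congr 1
        ring
      rwa [e] at this
    refine ⟨ℓ + 2, by omega, h3, ?_⟩
    -- the quadratic can take the value `Nr b` at most twice
    have e1 : Nr (C.pt 0 (ℓ + 1) ((m:ℤ) + 1)) =
        Nr (C.pt 0 ℓ ((m:ℤ) + 1)) + 2 * dt (C.pt 0 ℓ ((m:ℤ) + 1)) C.a + Nr C.a := by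
      rw [← C.pt_add_a, Nr_add]
    have e2 : Nr (C.pt 0 (ℓ + 2) ((m:ℤ) + 1)) =
        Nr (C.pt 0 (ℓ + 1) ((m:ℤ) + 1)) + 2 * dt (C.pt 0 (ℓ + 1) ((m:ℤ) + 1)) C.a + Nr C.a := by
      have e : C.pt 0 (ℓ + 1) ((m:ℤ) + 1) + C.a = C.pt 0 (ℓ + 2) ((m:ℤ) + 1) := by
        rw [C.pt_add_a]
        congr 1
        ring
      rw [← e, Nr_add]
    have e3 : dt (C.pt 0 (ℓ + 1) ((m:ℤ) + 1)) C.a = dt (C.pt 0 ℓ ((m:ℤ) + 1)) C.a + Nr C.a := by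
      rw [← C.pt_add_a]
      unfold dt Nr
      simp [Prod.fst_add, Prod.snd_add]
      ring
    have hNa := C.hNa
    intro hc
    rw [hn1] at e1
    rw [hn2] at e1 e2
    rw [hc] at e2
    linarith

lemma pump (m : ℤ) (hm : 0 ≤ m) :
    ∃ ℓ : ℤ, 1 ≤ ℓ ∧ C.pt 0 ℓ m ∈ C.S ∧ Nr (C.pt 0 ℓ m) ≠ Nr C.b := by
  obtain ⟨n, rfl⟩ := Int.eq_ofNat_of_zero_le hm
  exact C.pumpNat n

/-- Far points of the base coset exist in `S`. -/
lemma pump_far : ∀ B : ℤ, ∃ w, w ∈ C.S ∧ C.coset 0 w ∧ B < Nr w := by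
  intro B
  set m : ℤ := ((B * Nr C.a).natAbs : ℤ) + 1 with hm
  have hm0 : 0 ≤ m := by positivity
  obtain ⟨ℓ, hℓ, hS, -⟩ := C.pump m hm0
  refine ⟨C.pt 0 ℓ m, hS, ⟨ℓ, m, rfl⟩, ?_⟩
  have hcrs : crs (C.pt 0 ℓ m) C.a = m * crs C.b C.a := by
    rw [C.crs_pt_a]
    have : crs (0 : ℤ × ℤ) C.a = 0 := by unfold crs; simp
    rw [this, zero_add]
  have hsq : (m * crs C.b C.a)^2 ≤ Nr (C.pt 0 ℓ m) * Nr C.a := by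
    rw [← hcrs]
    exact crs_sq_le _ _
  have hc1 : 1 ≤ (crs C.b C.a)^2 := by
    have : crs C.b C.a ≠ 0 := by
      rw [crs_swap]; exact neg_ne_zero.mpr C.hab
    have h1 : 1 ≤ |crs C.b C.a| := Int.one_le_abs this
    nlinarith [sq_abs (crs C.b C.a), abs_nonneg (crs C.b C.a)]
  have hm2 : B * Nr C.a < m^2 := by
    have h1 : B * Nr C.a ≤ ((B * Nr C.a).natAbs : ℤ) := Int.le_natAbs
    nlinarith [Int.ofNat_zero_le ((B * Nr C.a).natAbs)]
  have hNa := C.hNa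
  have : B * Nr C.a < Nr (C.pt 0 ℓ m) * Nr C.a := by
    nlinarith [sq_nonneg m]
  exact lt_of_mul_lt_mul_right this (le_of_lt hNa)

lemma coset_add_a (u : ℤ × ℤ) : C.coset u (u + C.a) := by
  refine ⟨1, 0, ?_⟩
  unfold pt
  simp only [Prod.ext_iff, Prod.fst_add, Prod.snd_add]
  constructor <;> ring

lemma coset_sub_a (u : ℤ × ℤ) : C.coset u (u + -C.a) := by
  refine ⟨-1, 0, ?_⟩
  unfold pt
  simp only [Prod.ext_iff, Prod.fst_add, Prod.snd_add, Prod.fst_neg, Prod.snd_neg]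
  constructor <;> ring

lemma coset_add_b (u : ℤ × ℤ) : C.coset u (u + C.b) := by
  have h := C.swap.coset_add_a u
  rwa [C.swap_coset] at h

lemma coset_sub_b (u : ℤ × ℤ) : C.coset u (u + -C.b) := by
  have h := C.swap.coset_sub_a u
  rwa [C.swap_coset] at h

/-- One norm-increasing step in direction `±p`. -/
lemma zstep (w p : ℤ × ℤ) (hw : w ∈ C.S) (hfar : C.Q < Nr w) (hpF : p ∈ C.F)
    (hNp : Nr p ≤ C.Q) (hNp0 : 0 < Nr p) (hcrs : crs w p ≠ 0)
    (hcosp : C.coset w (w + p)) (hcosn : C.coset w (w + -p)) :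
    ∃ w'', w'' ∈ C.S ∧ C.coset w w'' ∧ Nr w + 1 ≤ Nr w'' := by
  by_cases hd : 0 ≤ dt w p
  · have hmem := C.hstep _ hw _ hpF (by omega) hcrs
    refine ⟨w + p, hmem, hcosp, ?_⟩
    rw [Nr_add]
    omega
  · have hnF := C.hsym _ hpF
    have hcrs' : crs w (-p) ≠ 0 := by rw [crs_neg_right]; exact neg_ne_zero.mpr hcrs
    have hmem := C.hstep _ hw _ hnF (by rw [Nr_neg]; omega) hcrs'
    refine ⟨w + -p, hmem, hcosn, ?_⟩
    rw [Nr_add, dt_neg, Nr_neg]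
    omega

/-- Zig-zag: from a far point of `S`, reach points of arbitrarily large norm in its coset. -/
lemma zigzag : ∀ (d : ℕ) (w : ℤ × ℤ), w ∈ C.S → C.Q < Nr w →
    ∃ w', w' ∈ C.S ∧ C.coset w w' ∧ Nr w + d ≤ Nr w' := by
  intro d
  induction d with
  | zero => exact fun w hw _ => ⟨w, hw, C.coset_refl w, by omega⟩
  | succ d ih =>
    intro w hw hfar
    obtain ⟨w', hw'S, hw'c, hw'N⟩ := ih w hw hfar
    have hw'far : C.Q < Nr w' := by omega
    have hw'0 : w' ≠ 0 := ne_zero_of_Nr_pos (lt_trans C.hQpos hw'far)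
    have hpar : crs w' C.a ≠ 0 ∨ crs w' C.b ≠ 0 := by
      by_contra hc
      push_neg at hc
      exact not_par_both hw'0 C.hab hc.1 hc.2
    have : ∃ w'', w'' ∈ C.S ∧ C.coset w' w'' ∧ Nr w' + 1 ≤ Nr w'' := by
      rcases hpar with hp | hp
      · exact C.zstep w' C.a hw'S hw'far C.haF C.hQa C.hNa hp
          (C.coset_add_a w') (C.coset_sub_a w')
      · exact C.zstep w' C.b hw'S hw'far C.hbF C.hQb C.hNb hp
          (C.coset_add_b w') (C.coset_sub_b w')
    obtain ⟨w'', h1, h2, h3⟩ := this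
    exact ⟨w'', h1, C.coset_trans hw'c h2, by omega⟩

lemma zigzag_far (x w : ℤ × ℤ) (hw : w ∈ C.S) (hc : C.coset x w) (hfar : C.Q < Nr w) :
    ∀ B : ℤ, ∃ w', w' ∈ C.S ∧ C.coset x w' ∧ B < Nr w' := by
  intro B
  obtain ⟨w', h1, h2, h3⟩ := C.zigzag (B + 1 - Nr w).toNat w hw hfar
  refine ⟨w', h1, C.coset_trans hc h2, ?_⟩
  omega

/-- Threshold beyond which rows/columns are entirely far and unobstructed. -/
def Kc (x : ℤ × ℤ) : ℤ :=
  max (((crs x C.b).natAbs : ℤ) + C.Q * Nr C.b + 1)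
      (((crs x C.a).natAbs : ℤ) + C.Q * Nr C.a + 1)

lemma Kc_nonneg (x : ℤ × ℤ) : 0 ≤ C.Kc x := by
  have h1 := C.hNb
  have h2 := C.hQpos
  have h3 : (0:ℤ) ≤ ((crs x C.b).natAbs : ℤ) := Int.ofNat_zero_le _
  have h4 : (0:ℤ) ≤ ((crs x C.b).natAbs : ℤ) + C.Q * Nr C.b + 1 := by nlinarith
  exact le_trans h4 (le_max_left _ _)

lemma swap_Kc (x : ℤ × ℤ) : C.swap.Kc x = C.Kc x := by
  unfold Kc
  rw [C.swap_Q]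
  exact max_comm _ _

/-- Columns beyond the threshold are far and may be traversed vertically. -/
lemma colFar (x : ℤ × ℤ) (σ τ : ℤ) (hσ : C.Kc x ≤ ((σ.natAbs : ℤ))) :
    C.Q < Nr (C.pt x σ τ) ∧ crs x C.b + σ * crs C.a C.b ≠ 0 := by
  set u := crs x C.b with hu
  set w := σ * crs C.a C.b with hw
  have hK1 : ((u.natAbs : ℤ)) + C.Q * Nr C.b + 1 ≤ C.Kc x := le_max_left _ _
  have hcab : 1 ≤ ((crs C.a C.b).natAbs : ℤ) := by
    have := Int.natAbs_pos.mpr C.hab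
    omega
  have hwabs : (w.natAbs : ℤ) = (σ.natAbs : ℤ) * ((crs C.a C.b).natAbs : ℤ) := by
    rw [hw, Int.natAbs_mul]
    push_cast
    ring
  have hwge : (σ.natAbs : ℤ) ≤ (w.natAbs : ℤ) := by
    rw [hwabs]
    nlinarith [Int.ofNat_zero_le σ.natAbs]
  have htri : (w.natAbs : ℤ) - (u.natAbs : ℤ) ≤ ((u + w).natAbs : ℤ) := by
    omega
  have hcolabs : C.Q * Nr C.b + 1 ≤ ((u + w).natAbs : ℤ) := by omega
  have hne : u + w ≠ 0 := by
    intro h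
    rw [h] at hcolabs
    simp at hcolabs
    have := C.hQpos
    have := C.hNb
    nlinarith
  constructor
  · -- farness
    have hcrseq : crs (C.pt x σ τ) C.b = u + w := by
      rw [C.crs_pt_b]
    have hsq : (u + w)^2 ≤ Nr (C.pt x σ τ) * Nr C.b := by
      rw [← hcrseq]
      exact crs_sq_le _ _
    have habs2 : (C.Q * Nr C.b + 1)^2 ≤ (u + w)^2 := by
      rw [← natAbs_sq' (u + w)]
      have h0 : (0:ℤ) ≤ C.Q * Nr C.b + 1 := by
        have := C.hQpos; have := C.hNb; nlinarith
      nlinarith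
    have hQNb := C.hQpos
    have hNb := C.hNb
    have key : C.Q * Nr C.b < Nr (C.pt x σ τ) * Nr C.b := by nlinarith
    exact lt_of_mul_lt_mul_right key (le_of_lt hNb)
  · exact hne

/-- Rows beyond the threshold are far and may be traversed horizontally. -/
lemma rowFar (x : ℤ × ℤ) (σ τ : ℤ) (hτ : C.Kc x ≤ ((τ.natAbs : ℤ))) :
    C.Q < Nr (C.pt x σ τ) ∧ crs x C.a + τ * crs C.b C.a ≠ 0 := by
  have h := C.swap.colFar x τ σ (by rwa [C.swap_Kc])
  rwa [C.swap_pt, C.swap_Q] at h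

/-- Bound on points inside the coordinate box. -/
lemma boxBound (x : ℤ × ℤ) (k σ τ : ℤ) (hσ : (σ.natAbs : ℤ) ≤ k) (hτ : (τ.natAbs : ℤ) ≤ k) :
    Nr (C.pt x σ τ) ≤ 3 * (Nr x + k^2 * Nr C.a + k^2 * Nr C.b) := by
  have hσ2 : σ^2 ≤ k^2 := by
    rw [← natAbs_sq' σ]
    nlinarith [Int.ofNat_zero_le σ.natAbs]
  have hτ2 : τ^2 ≤ k^2 := by
    rw [← natAbs_sq' τ]
    nlinarith [Int.ofNat_zero_le τ.natAbs]
  have t1 : (x.1 + σ*C.a.1 + τ*C.b.1)^2 ≤ 3*(x.1^2 + σ^2*C.a.1^2 + τ^2*C.b.1^2) := by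
    nlinarith [sq_nonneg (x.1 - σ*C.a.1), sq_nonneg (x.1 - τ*C.b.1), sq_nonneg (σ*C.a.1 - τ*C.b.1)]
  have t2 : (x.2 + σ*C.a.2 + τ*C.b.2)^2 ≤ 3*(x.2^2 + σ^2*C.a.2^2 + τ^2*C.b.2^2) := by
    nlinarith [sq_nonneg (x.2 - σ*C.a.2), sq_nonneg (x.2 - τ*C.b.2), sq_nonneg (σ*C.a.2 - τ*C.b.2)]
  have m1 : σ^2*C.a.1^2 ≤ k^2*C.a.1^2 := mul_le_mul_of_nonneg_right hσ2 (sq_nonneg _)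
  have m2 : σ^2*C.a.2^2 ≤ k^2*C.a.2^2 := mul_le_mul_of_nonneg_right hσ2 (sq_nonneg _)
  have m3 : τ^2*C.b.1^2 ≤ k^2*C.b.1^2 := mul_le_mul_of_nonneg_right hτ2 (sq_nonneg _)
  have m4 : τ^2*C.b.2^2 ≤ k^2*C.b.2^2 := mul_le_mul_of_nonneg_right hτ2 (sq_nonneg _)
  have e : Nr (C.pt x σ τ) = (x.1 + σ*C.a.1 + τ*C.b.1)^2 + (x.2 + σ*C.a.2 + τ*C.b.2)^2 := rfl
  have eN : Nr x = x.1^2 + x.2^2 := rfl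
  have eA : Nr C.a = C.a.1^2 + C.a.2^2 := rfl
  have eB : Nr C.b = C.b.1^2 + C.b.2^2 := rfl
  rw [e, eN, eA, eB]
  nlinarith

/-- Horizontal segment walk along a free row. -/
lemma segH (x : ℤ × ℤ) (τ : ℤ) (hrow : crs x C.a + τ * crs C.b C.a ≠ 0) :
    ∀ (n : ℕ) (σs σe : ℤ), (σe - σs).natAbs = n → C.pt x σs τ ∈ C.S →
      (∀ σ : ℤ, ((σs ≤ σ ∧ σ < σe) ∨ (σe < σ ∧ σ ≤ σs)) → C.Q < Nr (C.pt x σ τ)) →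
      C.pt x σe τ ∈ C.S := by
  intro n
  induction n with
  | zero =>
    intro σs σe hn h0 _
    have : σe = σs := by omega
    rwa [this]
  | succ n ih =>
    intro σs σe hn h0 hg
    have hne : σs ≠ σe := by
      intro h
      rw [h] at hn
      simp at hn
    have hcrs : crs (C.pt x σs τ) C.a ≠ 0 := by
      rw [C.crs_pt_a]
      exact hrow
    by_cases hlt : σs < σe
    · have hfar : C.Q < Nr (C.pt x σs τ) := hg σs (by omega)
      have hne' : Nr (C.pt x σs τ) ≠ Nr C.a := ne_of_gt (lt_of_le_of_lt C.hQa hfar)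
      have hmem := C.hstep _ h0 _ C.haF hne' hcrs
      rw [C.pt_add_a] at hmem
      exact ih (σs + 1) σe (by omega) hmem (fun σ hσ => hg σ (by omega))
    · have hgt : σe < σs := by omega
      have hfar : C.Q < Nr (C.pt x σs τ) := hg σs (by omega)
      have hne' : Nr (C.pt x σs τ) ≠ Nr (-C.a) := by
        rw [Nr_neg]
        exact ne_of_gt (lt_of_le_of_lt C.hQa hfar)
      have hcrs' : crs (C.pt x σs τ) (-C.a) ≠ 0 := by
        rw [crs_neg_right]
        exact neg_ne_zero.mpr hcrs
      have hmem := C.hstep _ h0 _ (C.hsym _ C.haF) hne' hcrs'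
      rw [C.pt_sub_a] at hmem
      exact ih (σs - 1) σe (by omega) hmem (fun σ hσ => hg σ (by omega))

/-- Vertical segment walk along a free column. -/
lemma segV (x : ℤ × ℤ) (σ : ℤ) (hcol : crs x C.b + σ * crs C.a C.b ≠ 0) :
    ∀ (n : ℕ) (τs τe : ℤ), (τe - τs).natAbs = n → C.pt x σ τs ∈ C.S →
      (∀ τ : ℤ, ((τs ≤ τ ∧ τ < τe) ∨ (τe < τ ∧ τ ≤ τs)) → C.Q < Nr (C.pt x σ τ)) →
      C.pt x σ τe ∈ C.S := by
  intro n τs τe hn h0 hg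
  have h := C.swap.segH x σ hcol n τs τe hn
  rw [C.swap_pt] at h
  have h2 := h h0
  rw [C.swap_pt] at h2
  apply h2
  intro τ hτ
  rw [C.swap_pt, C.swap_Q]
  exact hg τ hτ

/-- Main per-coset lemma: if the coset of `x` contains points of `S` of arbitrarily large
norm, then the whole coset (except `0`) is contained in `S`. -/
lemma maincoset (x : ℤ × ℤ)
    (Hfar : ∀ B : ℤ, ∃ w, w ∈ C.S ∧ C.coset x w ∧ B < Nr w) :
    ∀ y, C.coset x y → y ≠ 0 → y ∈ C.S := by
  set k := C.Kc x with hkdef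
  have hk0 : 0 ≤ k := C.Kc_nonneg x
  set M := 3 * (Nr x + k^2 * Nr C.a + k^2 * Nr C.b) with hMdef
  have hbox : ∀ σ τ : ℤ, M < Nr (C.pt x σ τ) → (k ≤ (σ.natAbs : ℤ) ∨ k ≤ (τ.natAbs : ℤ)) := by
    intro σ τ hM
    by_contra hc
    push_neg at hc
    have := C.boxBound x k σ τ (le_of_lt hc.1) (le_of_lt hc.2)
    omega
  -- Far field: every coordinate point outside the box belongs to S.
  have farAll : ∀ σt τt : ℤ, (k ≤ (σt.natAbs : ℤ) ∨ k ≤ (τt.natAbs : ℤ)) →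
      C.pt x σt τt ∈ C.S := by
    intro σt τt hOB
    obtain ⟨w, hwS, hwcos, hwN⟩ := Hfar M
    obtain ⟨σ0, τ0, rfl⟩ := hwcos
    have hOB0 := hbox σ0 τ0 hwN
    -- signs and corner coordinates
    obtain ⟨sσ, hsσ⟩ : ∃ s : ℤ, (s = 1 ∧ 0 ≤ σt) ∨ (s = -1 ∧ σt < 0) := by
      by_cases h : 0 ≤ σt
      · exact ⟨1, Or.inl ⟨rfl, h⟩⟩
      · exact ⟨-1, Or.inr ⟨rfl, by omega⟩⟩
    obtain ⟨sτ, hsτ⟩ : ∃ s : ℤ, (s = 1 ∧ 0 ≤ τt) ∨ (s = -1 ∧ τt < 0) := by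
      by_cases h : 0 ≤ τt
      · exact ⟨1, Or.inl ⟨rfl, h⟩⟩
      · exact ⟨-1, Or.inr ⟨rfl, by omega⟩⟩
    set cB := σt + sσ * k with hcBdef
    set rB := τt + sτ * k with hrBdef
    have hcB1 : (cB.natAbs : ℤ) = (σt.natAbs : ℤ) + k := by
      rcases hsσ with ⟨rfl, h⟩ | ⟨rfl, h⟩ <;> omega
    have hrB1 : (rB.natAbs : ℤ) = (τt.natAbs : ℤ) + k := by
      rcases hsτ with ⟨rfl, h⟩ | ⟨rfl, h⟩ <;> omega
    have hcBk : k ≤ (cB.natAbs : ℤ) := by omega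
    have hrBk : k ≤ (rB.natAbs : ℤ) := by omega
    have hbetween : ∀ σ : ℤ, ((cB ≤ σ ∧ σ < σt) ∨ (σt < σ ∧ σ ≤ cB)) →
        (σt.natAbs : ℤ) < (σ.natAbs : ℤ) := by
      intro σ h
      rcases hsσ with ⟨rfl, h'⟩ | ⟨rfl, h'⟩ <;> omega
    -- reach the far corner (cB, rB)
    have hcorner : C.pt x cB rB ∈ C.S := by
      rcases hOB0 with h0 | h0
      · have hw1 : C.pt x σ0 rB ∈ C.S := by
          refine C.segV x σ0 (C.colFar x σ0 0 h0).2 ((rB - τ0).natAbs) τ0 rB rfl hwS ?_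
          intro τ _
          exact (C.colFar x σ0 τ h0).1
        refine C.segH x rB (C.rowFar x 0 rB hrBk).2 ((cB - σ0).natAbs) σ0 cB rfl hw1 ?_
        intro σ _
        exact (C.rowFar x σ rB hrBk).1
      · have hw1 : C.pt x cB τ0 ∈ C.S := by
          refine C.segH x τ0 (C.rowFar x 0 τ0 h0).2 ((cB - σ0).natAbs) σ0 cB rfl hwS ?_
          intro σ _
          exact (C.rowFar x σ τ0 h0).1
        refine C.segV x cB (C.colFar x cB 0 hcBk).2 ((rB - τ0).natAbs) τ0 rB rfl hw1 ?_
        intro τ _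
        exact (C.colFar x cB τ hcBk).1
    -- entry into the target
    by_cases hrowt : crs x C.a + τt * crs C.b C.a ≠ 0
    · -- enter horizontally along row τt
      have he1 : C.pt x cB τt ∈ C.S := by
        refine C.segV x cB (C.colFar x cB 0 hcBk).2 ((τt - rB).natAbs) rB τt rfl hcorner ?_
        intro τ _
        exact (C.colFar x cB τ hcBk).1
      refine C.segH x τt hrowt ((σt - cB).natAbs) cB σt rfl he1 ?_
      intro σ hσ
      rcases hOB with hs | hs
      · have : k ≤ (σ.natAbs : ℤ) := le_of_lt (lt_of_le_of_lt hs (hbetween σ hσ))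
        exact (C.colFar x σ τt this).1
      · exact (C.rowFar x σ τt hs).1
    · -- the row of the target is blocked; enter vertically
      push_neg at hrowt
      have hτtk : (τt.natAbs : ℤ) < k := by
        by_contra hc
        push_neg at hc
        exact (C.rowFar x 0 τt hc).2 hrowt
      have hσtk : k ≤ (σt.natAbs : ℤ) := by
        rcases hOB with h | h
        · exact h
        · omega
      have htfar : C.Q < Nr (C.pt x σt τt) := (C.colFar x σt τt hσtk).1
      have ht0 : C.pt x σt τt ≠ 0 := ne_zero_of_Nr_pos (lt_trans C.hQpos htfar)
      have hcolt : crs x C.b + σt * crs C.a C.b ≠ 0 := by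
        intro hc
        refine not_par_both ht0 C.hab ?_ ?_
        · rw [C.crs_pt_a]; exact hrowt
        · rw [C.crs_pt_b]; exact hc
      have he1 : C.pt x σt rB ∈ C.S := by
        refine C.segH x rB (C.rowFar x 0 rB hrBk).2 ((σt - cB).natAbs) cB σt rfl hcorner ?_
        intro σ _
        exact (C.rowFar x σ rB hrBk).1
      refine C.segV x σt hcolt ((τt - rB).natAbs) rB τt rfl he1 ?_
      intro τ _
      exact (C.colFar x σt τ hσtk).1
  -- Descent: strong downward induction on the norm.
  have desc : ∀ (d : ℕ) (y : ℤ × ℤ), C.coset x y → y ≠ 0 → M < Nr y + d → y ∈ C.S := by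
    intro d
    induction d with
    | zero =>
      intro y hc h0 hM
      obtain ⟨σ, τ, rfl⟩ := hc
      exact farAll σ τ (hbox σ τ (by omega))
    | succ d ih =>
      intro y hc h0 hM
      by_cases hbig : M < Nr y
      · obtain ⟨σ, τ, rfl⟩ := hc
        exact farAll σ τ (hbox σ τ hbig)
      · obtain ⟨σ, τ, hyeq⟩ := hc
        have hNy : 0 < Nr y := Nr_pos h0
        have hpar : crs y C.a ≠ 0 ∨ crs y C.b ≠ 0 := by
          by_contra hcon
          push_neg at hcon
          exact not_par_both h0 C.hab hcon.1 hcon.2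
        rcases hpar with hp | hp
        · by_cases hd : 0 ≤ dt y C.a
          · -- predecessor y + a, step -a
            set z := y + C.a with hz
            have hNz : Nr y + Nr C.a ≤ Nr z := by
              rw [hz, Nr_add]; omega
            have hzS : z ∈ C.S := by
              refine ih z ⟨σ + 1, τ, ?_⟩ (ne_zero_of_Nr_pos (by have := C.hNa; omega)) (by have := C.hNa; omega)
              rw [hz, hyeq, C.pt_add_a]
            have hcrs : crs z (-C.a) ≠ 0 := by
              rw [crs_neg_right]
              refine neg_ne_zero.mpr ?_
              have : crs z C.a = crs y C.a := by rw [hz]; unfold crs; simp [Prod.fst_add, Prod.snd_add]; ring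
              rwa [this]
            have hne : Nr z ≠ Nr (-C.a) := by
              rw [Nr_neg]
              have := C.hNa
              omega
            have := C.hstep _ hzS _ (C.hsym _ C.haF) hne hcrs
            have he : z + -C.a = y := by rw [hz]; abel
            rwa [he] at this
          · -- predecessor y - a, step a
            push_neg at hd
            set z := y + -C.a with hz
            have hNz : Nr y + Nr C.a ≤ Nr z := by
              rw [hz, Nr_add, dt_neg, Nr_neg]; omega
            have hzS : z ∈ C.S := by
              refine ih z ⟨σ - 1, τ, ?_⟩ (ne_zero_of_Nr_pos (by have := C.hNa; omega)) (by have := C.hNa; omega)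
              rw [hz, hyeq, C.pt_sub_a]
            have hcrs : crs z C.a ≠ 0 := by
              have : crs z C.a = crs y C.a := by rw [hz]; unfold crs; simp [Prod.fst_add, Prod.snd_add, Prod.fst_neg, Prod.snd_neg]; ring
              rwa [this]
            have hne : Nr z ≠ Nr C.a := by
              have := C.hNa
              omega
            have := C.hstep _ hzS _ C.haF hne hcrs
            have he : z + C.a = y := by rw [hz]; abel
            rwa [he] at this
        · by_cases hd : 0 ≤ dt y C.b
          · set z := y + C.b with hz
            have hNz : Nr y + Nr C.b ≤ Nr z := by
              rw [hz, Nr_add]; omega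
            have hzS : z ∈ C.S := by
              refine ih z ⟨σ, τ + 1, ?_⟩ (ne_zero_of_Nr_pos (by have := C.hNb; omega)) (by have := C.hNb; omega)
              rw [hz, hyeq, C.pt_add_b]
            have hcrs : crs z (-C.b) ≠ 0 := by
              rw [crs_neg_right]
              refine neg_ne_zero.mpr ?_
              have : crs z C.b = crs y C.b := by rw [hz]; unfold crs; simp [Prod.fst_add, Prod.snd_add]; ring
              rwa [this]
            have hne : Nr z ≠ Nr (-C.b) := by
              rw [Nr_neg]
              have := C.hNb
              omega
            have := C.hstep _ hzS _ (C.hsym _ C.hbF) hne hcrs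
            have he : z + -C.b = y := by rw [hz]; abel
            rwa [he] at this
          · push_neg at hd
            set z := y + -C.b with hz
            have hNz : Nr y + Nr C.b ≤ Nr z := by
              rw [hz, Nr_add, dt_neg, Nr_neg]; omega
            have hzS : z ∈ C.S := by
              refine ih z ⟨σ, τ - 1, ?_⟩ (ne_zero_of_Nr_pos (by have := C.hNb; omega)) (by have := C.hNb; omega)
              rw [hz, hyeq, C.pt_sub_b]
            have hcrs : crs z C.b ≠ 0 := by
              have : crs z C.b = crs y C.b := by rw [hz]; unfold crs; simp [Prod.fst_add, Prod.snd_add, Prod.fst_neg, Prod.snd_neg]; ring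
              rwa [this]
            have hne : Nr z ≠ Nr C.b := by
              have := C.hNb
              omega
            have := C.hstep _ hzS _ C.hbF hne hcrs
            have he : z + C.b = y := by rw [hz]; abel
            rwa [he] at this
  intro y hc h0
  exact desc (M + 1 - Nr y).toNat y hc h0 (by omega)

lemma pt_shift (x f : ℤ × ℤ) (σ τ : ℤ) : C.pt x σ τ + f = C.pt (x + f) σ τ := by
  unfold pt
  simp only [Prod.ext_iff, Prod.fst_add, Prod.snd_add]
  constructor <;> ring

/-- Columns far enough out have norm larger than any prescribed bound `G`. -/
lemma colBig (x : ℤ × ℤ) (G σ τ : ℤ) (hG : 0 ≤ G)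
    (hσ : ((crs x C.b).natAbs : ℤ) + G * Nr C.b + 1 ≤ (σ.natAbs : ℤ)) :
    G < Nr (C.pt x σ τ) := by
  set u := crs x C.b with hu
  set w := σ * crs C.a C.b with hw
  have hcab : 1 ≤ ((crs C.a C.b).natAbs : ℤ) := by
    have := Int.natAbs_pos.mpr C.hab
    omega
  have hwabs : (w.natAbs : ℤ) = (σ.natAbs : ℤ) * ((crs C.a C.b).natAbs : ℤ) := by
    rw [hw, Int.natAbs_mul]
    push_cast
    ring
  have hwge : (σ.natAbs : ℤ) ≤ (w.natAbs : ℤ) := by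
    rw [hwabs]
    nlinarith [Int.ofNat_zero_le σ.natAbs]
  have hcolabs : G * Nr C.b + 1 ≤ ((u + w).natAbs : ℤ) := by omega
  have hcrseq : crs (C.pt x σ τ) C.b = u + w := by
    rw [C.crs_pt_b]
  have hsq : (u + w)^2 ≤ Nr (C.pt x σ τ) * Nr C.b := by
    rw [← hcrseq]
    exact crs_sq_le _ _
  have hNb := C.hNb
  have habs2 : (G * Nr C.b + 1)^2 ≤ (u + w)^2 := by
    rw [← natAbs_sq' (u + w)]
    have h0 : (0:ℤ) ≤ G * Nr C.b + 1 := by nlinarith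
    nlinarith
  have key : G * Nr C.b < Nr (C.pt x σ τ) * Nr C.b := by nlinarith
  exact lt_of_mul_lt_mul_right key (le_of_lt hNb)

/-- Seed a new coset: given full coverage of the coset of `xb`, produce a far point of `S`
in the coset of `xb + f`, assuming `f` is not parallel to `a`. -/
lemma seedAux (xb f : ℤ × ℤ) (hfF : f ∈ C.F) (haf : crs C.a f ≠ 0)
    (hcov : ∀ y, C.coset xb y → y ≠ 0 → y ∈ C.S) :
    ∃ x', x' ∈ C.S ∧ C.Q < Nr x' ∧ C.coset (xb + f) x' := by
  set G : ℤ := 2 * Nr f + 2 * C.Q + 1 with hGdef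
  have hNf : 0 ≤ Nr f := Nr_nonneg f
  have hQ := C.hQpos
  have hG : 0 ≤ G := by omega
  set s0 : ℤ := ((crs xb C.b).natAbs : ℤ) + G * Nr C.b + 1 with hs0def
  have hs00 : 0 ≤ s0 := by
    have := Int.ofNat_zero_le (crs xb C.b).natAbs
    have := C.hNb
    nlinarith
  -- choose s ∈ {s0, s0+1} with crs y f ≠ 0
  obtain ⟨s, hsrange, hscrs⟩ :
      ∃ s : ℤ, (s = s0 ∨ s = s0 + 1) ∧ crs xb f + s * crs C.a f ≠ 0 := by
    by_cases h : crs xb f + s0 * crs C.a f ≠ 0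
    · exact ⟨s0, Or.inl rfl, h⟩
    · push_neg at h
      refine ⟨s0 + 1, Or.inr rfl, ?_⟩
      intro hc
      apply haf
      linarith [h, hc]
  set y := C.pt xb s 0 with hydef
  have hsabs : s0 ≤ (s.natAbs : ℤ) := by
    rcases hsrange with rfl | rfl <;> omega
  have hyBig : G < Nr y := C.colBig xb G s 0 hG hsabs
  have hy0 : y ≠ 0 := ne_zero_of_Nr_pos (by omega)
  have hyS : y ∈ C.S := hcov y ⟨s, 0, rfl⟩ hy0
  have hycrs : crs y f ≠ 0 := by
    rw [hydef, C.crs_pt_f]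
    simpa using hscrs
  have hyNe : Nr y ≠ Nr f := by omega
  have hxS : y + f ∈ C.S := C.hstep _ hyS _ hfF hyNe hycrs
  refine ⟨y + f, hxS, ?_, ?_⟩
  · -- the new point is still far
    have hadd : Nr (y + f) = Nr y + 2 * dt y f + Nr f := Nr_add y f
    have hlag : (dt y f)^2 ≤ Nr y * Nr f := by
      have := lagrange y f
      nlinarith [sq_nonneg (crs y f)]
    by_contra hcon
    push_neg at hcon
    have hD : 2 * dt y f ≤ C.Q - Nr y - Nr f := by omega
    have h1 : 0 < Nr y + Nr f - C.Q := by omega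
    have h2 : (Nr y + Nr f - C.Q)^2 ≤ 4 * (dt y f)^2 := by
      nlinarith [mul_nonneg (by linarith : (0:ℤ) ≤ -(2 * dt y f) - (Nr y + Nr f - C.Q))
        (by linarith : (0:ℤ) ≤ -(2 * dt y f) + (Nr y + Nr f - C.Q))]
    have h3 : 4 * (dt y f)^2 ≤ 4 * (Nr y * Nr f) := by nlinarith
    have h4 : (Nr y - Nr f - C.Q)^2 ≤ 4 * C.Q * Nr f := by nlinarith
    have h5 : Nr f + C.Q < Nr y - Nr f - C.Q := by omega
    have h6 : (Nr f + C.Q)^2 < (Nr y - Nr f - C.Q)^2 := by nlinarith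
    nlinarith [sq_nonneg (Nr f - C.Q)]
  · rw [hydef, C.pt_shift]
    exact ⟨s, 0, rfl⟩

/-- Seed a new coset, general version. -/
lemma seed (xb f : ℤ × ℤ) (hfF : f ∈ C.F)
    (hcov : ∀ y, C.coset xb y → y ≠ 0 → y ∈ C.S) :
    ∃ x', x' ∈ C.S ∧ C.Q < Nr x' ∧ C.coset (xb + f) x' := by
  have hf0 : f ≠ 0 := fun h => C.h0F (h ▸ hfF)
  have hpar : crs C.a f ≠ 0 ∨ crs C.b f ≠ 0 := by
    by_contra hc
    push_neg at hc
    refine not_par_both hf0 C.hab ?_ ?_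
    · rw [crs_swap]; exact neg_eq_zero.mpr hc.1
    · rw [crs_swap]; exact neg_eq_zero.mpr hc.2
  rcases hpar with h | h
  · exact C.seedAux xb f hfF h hcov
  · have := C.swap.seedAux xb f hfF h (by
      intro y hy hy0
      exact hcov y ((C.swap_coset xb y).mp hy) hy0)
    obtain ⟨x', h1, h2, h3⟩ := this
    rw [C.swap_Q] at h2
    rw [C.swap_coset] at h3
    exact ⟨x', h1, h2, h3⟩

/-- Every coset of a sum of elements of `F` is covered by `S` (except `0`). -/
lemma cover : ∀ l : List (ℤ × ℤ), (∀ f ∈ l, f ∈ C.F) →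
    ∀ y, C.coset l.sum y → y ≠ 0 → y ∈ C.S := by
  intro l
  induction l with
  | nil =>
    intro _ y hc h0
    refine C.maincoset 0 C.pump_far y ?_ h0
    simpa using hc
  | cons f l ih =>
    intro hmem y hc h0
    have hcov := ih (fun g hg => hmem g (List.mem_cons_of_mem f hg))
    obtain ⟨x', hx'S, hx'far, hx'c⟩ := C.seed l.sum f (hmem f List.mem_cons_self) hcov
    have Hfar := C.zigzag_far x' x' hx'S (C.coset_refl x') hx'far
    refine C.maincoset x' Hfar y ?_ h0
    have hsum : (f :: l).sum = l.sum + f := by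
      rw [List.sum_cons]
      ring
    rw [hsum] at hc
    exact C.coset_trans (C.coset_symm hx'c) hc

end Ctx

/-- Conversion of subgroup closure to submonoid closure for symmetric sets. -/
lemma mem_addSubmonoid_closure {F : Set (ℤ × ℤ)} (hsym : ∀ f ∈ F, -f ∈ F) {p : ℤ × ℤ}
    (hp : p ∈ AddSubgroup.closure F) : p ∈ AddSubmonoid.closure F := by
  have hneg : ∀ q ∈ AddSubmonoid.closure F, -q ∈ AddSubmonoid.closure F := by
    intro q hq
    induction hq using AddSubmonoid.closure_induction with
    | mem x hx => exact AddSubmonoid.subset_closure (hsym x hx)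
    | zero => simpa using AddSubmonoid.zero_mem _
    | add x y hx hy ihx ihy =>
      have : -(x + y) = -x + -y := by ring
      rw [this]
      exact AddSubmonoid.add_mem _ ihx ihy
  let G : AddSubgroup (ℤ × ℤ) :=
    { toAddSubmonoid := AddSubmonoid.closure F
      neg_mem' := fun {q} hq => hneg q hq }
  have hle : AddSubgroup.closure F ≤ G := (AddSubgroup.closure_le G).mpr
    (fun f hf => AddSubmonoid.subset_closure hf)
  exact hle hp

end ForcedModes

open ForcedModes

/-- **Propagation of forced modes to all of `ℤ² ∖ {0}`.**
Let `F ⊆ ℤ² ∖ {0}` be a finite symmetric set containing two vectors of different Euclidean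
norms and generating `ℤ²` as a group.  Define `A₀ := F` and
`A_{n+1} := A_n ∪ {k + j : k ∈ A_n, j ∈ F, |k| ≠ |j|, k·j^⊥ ≠ 0}`.
Then `⋃ₙ Aₙ = ℤ² ∖ {0}`. -/
theorem iUnion_forced_modes_eq_nonzero
    (F : Set (ℤ × ℤ)) (hFfin : F.Finite) (hF0 : (0 : ℤ × ℤ) ∉ F)
    (hFsym : ∀ k ∈ F, -k ∈ F)
    (hFnorm : ∃ k ∈ F, ∃ j ∈ F, k.1 ^ 2 + k.2 ^ 2 ≠ j.1 ^ 2 + j.2 ^ 2)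
    (hFgen : AddSubgroup.closure F = ⊤)
    (A : ℕ → Set (ℤ × ℤ))
    (hA0 : A 0 = F)
    (hAs : ∀ n, A (n + 1) = A n ∪
      {p | ∃ k ∈ A n, ∃ j ∈ F,
        k.1 ^ 2 + k.2 ^ 2 ≠ j.1 ^ 2 + j.2 ^ 2 ∧
        k.1 * (-j.2) + k.2 * j.1 ≠ 0 ∧ p = k + j}) :
    (⋃ n, A n) = {p : ℤ × ℤ | p ≠ 0} := by
  have hFS : F ⊆ ⋃ n, A n := fun f hf => Set.mem_iUnion.mpr ⟨0, by rw [hA0]; exact hf⟩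
  have hstep : ∀ k ∈ ⋃ n, A n, ∀ j ∈ F, Nr k ≠ Nr j → crs k j ≠ 0 →
      k + j ∈ ⋃ n, A n := by
    intro k hk j hj hN hcrs
    obtain ⟨n, hn⟩ := Set.mem_iUnion.mp hk
    refine Set.mem_iUnion.mpr ⟨n + 1, ?_⟩
    rw [hAs n]
    refine Or.inr ⟨k, hn, j, hj, hN, ?_, rfl⟩
    intro h
    apply hcrs
    unfold crs
    linarith
  -- find two independent generators of different norms
  obtain ⟨k, hk, j, hj, hneq⟩ := hFnorm
  have hk0 : k ≠ 0 := fun h => hF0 (h ▸ hk)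
  have hj0 : j ≠ 0 := fun h => hF0 (h ▸ hj)
  have hneq' : Nr k ≠ Nr j := hneq
  have habex : ∃ a ∈ F, ∃ b ∈ F, crs a b ≠ 0 ∧ Nr a ≠ Nr b := by
    by_cases hkj : crs k j ≠ 0
    · exact ⟨k, hk, j, hj, hkj, hneq'⟩
    push_neg at hkj
    have hm : ∃ m ∈ F, crs k m ≠ 0 := by
      by_contra hall
      push_neg at hall
      let Ker : AddSubgroup (ℤ × ℤ) :=
        { carrier := {p | crs k p = 0}
          add_mem' := by
            intro p q hp hq
            simp only [Set.mem_setOf_eq] at *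
            unfold crs at *
            rw [Prod.fst_add, Prod.snd_add]
            linarith
          zero_mem' := by simp [crs]
          neg_mem' := by
            intro p hp
            simp only [Set.mem_setOf_eq] at *
            unfold crs at *
            rw [Prod.fst_neg, Prod.snd_neg]
            linarith }
      have hle : AddSubgroup.closure F ≤ Ker :=
        (AddSubgroup.closure_le _).mpr (fun m hmF => hall m hmF)
      rw [hFgen] at hle
      have hmem : ((-k.2, k.1) : ℤ × ℤ) ∈ Ker := hle trivial
      have : crs k (-k.2, k.1) = 0 := hmem
      unfold crs at this
      simp only at this
      have hNk : 0 < Nr k := Nr_pos hk0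
      unfold Nr at hNk
      nlinarith
    obtain ⟨m, hmF, hkm⟩ := hm
    by_cases hNm : Nr m = Nr k
    · refine ⟨j, hj, m, hmF, ?_, ?_⟩
      · intro h0
        have hjk : crs j k = 0 := by rw [crs_swap, hkj]; ring
        exact hkm (partrans hj0 hjk h0)
      · intro h
        exact hneq' (by rw [h, hNm])
    · exact ⟨k, hk, m, hmF, hkm, fun h => hNm h.symm⟩
  obtain ⟨a, haF, b, hbF, hab, hNab⟩ := habex
  let C : Ctx := ⟨⋃ n, A n, F, a, b, hFS, hstep, haF, hbF, hFsym, hab, hNab, hF0⟩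
  -- every nonzero point is reached
  have hsub2 : ∀ p : ℤ × ℤ, p ≠ 0 → p ∈ ⋃ n, A n := by
    intro p hp
    have hpcl : p ∈ AddSubgroup.closure F := by rw [hFgen]; trivial
    have hpm := mem_addSubmonoid_closure hFsym hpcl
    obtain ⟨l, hlF, hlsum⟩ := AddSubmonoid.exists_list_of_mem_closure hpm
    exact C.cover l hlF p (by rw [hlsum]; exact C.coset_refl p) hp
  -- no point of any `A n` is zero
  have hsub1 : ∀ n, ∀ p ∈ A n, p ≠ (0 : ℤ × ℤ) := by
    intro n
    induction n with
    | zero =>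
      intro p hp
      rw [hA0] at hp
      exact fun h => hF0 (h ▸ hp)
    | succ n ih =>
      intro p hp
      rw [hAs n] at hp
      rcases hp with hp | hp
      · exact ih p hp
      · obtain ⟨k', hk', j', hj', hnm, hcr, rfl⟩ := hp
        intro h
        have hkj : k' = -j' := eq_neg_of_add_eq_zero_left h
        apply hnm
        rw [hkj, Prod.fst_neg, Prod.snd_neg]
        ring
  ext p
  simp only [Set.mem_iUnion, Set.mem_setOf_eq]
  constructor
  · rintro ⟨n, hn⟩
    exact hsub1 n p hn
  · intro hp
    exact Set.mem_iUnion.mp (hsub2 p hp)
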